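/- Let c ∈ (0,1), s = √(1-c²). The 6×6 matrix A'' with blocks A₁₁ = [[0,1,s],[-1,0,0],[-s/c,0,0]], A₁₂ = [[c-c²,0,0],[0,c-1,-s],[0,s,c-1]], A₂₁ = diag(1/(c(1+c)), 1/(1+c), 1/(1+c)), A₂₂ = [[0,0,2s/(1+c)],[0,0,0],[0,0,0]] has characteristic polynomial λ⁶ + λ⁴·(1+3c-c²-c³)/(c(1+c)) + λ²·(1-c)(3+3c-2c²)/(1+c)² + 2c(1-c)²/(1+c)³. -/

import Mathlib

open Matrix
set_option maxHeartbeats 1000000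

theorem stmt_18 (c s : ℝ) (hc : 0 < c) (hc1 : c < 1)
    (hs : s = Real.sqrt (1 - c ^ 2))
    (A : Matrix (Fin 3 ⊕ Fin 3) (Fin 3 ⊕ Fin 3) ℝ)
    (hA : A = Matrix.fromBlocks
      !![0, 1, s; -1, 0, 0; -s / c, 0, 0]
      !![c - c ^ 2, 0, 0; 0, c - 1, -s; 0, s, c - 1]
      !![1 / (c * (1 + c)), 0, 0; 0, 1 / (1 + c), 0; 0, 0, 1 / (1 + c)]
      !![0, 0, 2 * s / (1 + c); 0, 0, 0; 0, 0, 0]) :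
    ∀ x : ℝ, (x • (1 : Matrix (Fin 3 ⊕ Fin 3) (Fin 3 ⊕ Fin 3) ℝ) - A).det =
      x ^ 6 + x ^ 4 * ((1 + 3 * c - c ^ 2 - c ^ 3) / (c * (1 + c))) +
        x ^ 2 * ((1 - c) * (3 + 3 * c - 2 * c ^ 2) / (1 + c) ^ 2) +
        2 * c * (1 - c) ^ 2 / (1 + c) ^ 3 := by
  intro x
  have hc0 : c ≠ 0 := ne_of_gt hc
  have h1c : (1 + c) ≠ 0 := by positivity
  have hs2 : s ^ 2 = 1 - c ^ 2 := by
    rw [hs, Real.sq_sqrt]; nlinarith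
  clear hs
  set Ab : Matrix (Fin 3) (Fin 3) ℝ := !![x, -1, -s; 1, x, 0; s / c, 0, x] with hAb
  set Bb : Matrix (Fin 3) (Fin 3) ℝ := !![-(c - c ^ 2), 0, 0; 0, -(c - 1), s; 0, -s, -(c - 1)] with hBb
  set Cb : Matrix (Fin 3) (Fin 3) ℝ := !![-(1 / (c * (1 + c))), 0, 0; 0, -(1 / (1 + c)), 0; 0, 0, -(1 / (1 + c))] with hCb
  set Db : Matrix (Fin 3) (Fin 3) ℝ := !![x, 0, -(2 * s / (1 + c)); 0, x, 0; 0, 0, x] with hDb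
  set Ci : Matrix (Fin 3) (Fin 3) ℝ := !![-(c * (1 + c)), 0, 0; 0, -(1 + c), 0; 0, 0, -(1 + c)] with hCi
  have hM : x • (1 : Matrix (Fin 3 ⊕ Fin 3) (Fin 3 ⊕ Fin 3) ℝ) - A
      = Matrix.fromBlocks Ab Bb Cb Db := by
    subst hA
    ext i j
    rcases i with i | i <;> rcases j with j | j <;>
      fin_cases i <;> fin_cases j <;>
      simp [Matrix.fromBlocks, Matrix.one_apply, Matrix.vecHead, Matrix.vecTail,
        Function.comp, hAb, hBb, hCb, hDb] <;> ring
  rw [hM]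
  have hswap : Matrix.fromBlocks Ab Bb Cb Db
      = (Matrix.fromBlocks Bb Ab Db Cb).submatrix id (Equiv.sumComm (Fin 3) (Fin 3)) := by
    ext i j
    rcases i with i | i <;> rcases j with j | j <;> rfl
  have hCC : Cb * Ci = 1 := by
    rw [hCb, hCi]
    ext i j
    fin_cases i <;> fin_cases j <;>
      simp [Matrix.mul_apply, Fin.sum_univ_succ, Matrix.one_apply] <;> field_simp <;> ring
  have hCC' : Ci * Cb = 1 := by
    rw [hCb, hCi]
    ext i j
    fin_cases i <;> fin_cases j <;>
      simp [Matrix.mul_apply, Fin.sum_univ_succ, Matrix.one_apply] <;> field_simp <;> ring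
  letI : Invertible Cb := ⟨Ci, hCC', hCC⟩
  have hinvC : ⅟Cb = Ci := rfl
  have hsign : Equiv.Perm.sign (Equiv.sumComm (Fin 3) (Fin 3)) = -1 := by decide
  rw [hswap, Matrix.det_permute', hsign, Matrix.det_fromBlocks₂₂, hinvC]
  have hdetC : Cb.det = -(1 / (c * (1 + c) ^ 3)) := by
    rw [hCb, Matrix.det_fin_three]
    simp
    field_simp
  have hprod : Bb - Ab * Ci * Db =
      !![-(c - c ^ 2) + c * (1 + c) * x ^ 2, -((1 + c) * x), -(s * x * (1 + 3 * c));
         c * (1 + c) * x, -(c - 1) + (1 + c) * x ^ 2, s - 2 * c * s;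
         s * (1 + c) * x, -s, -(c - 1) - 2 * s ^ 2 + (1 + c) * x ^ 2] := by
    rw [hAb, hBb, hCi, hDb, Matrix.mul_fin_three, Matrix.mul_fin_three]
    ext i j
    fin_cases i <;> fin_cases j <;>
      simp [Matrix.sub_apply, Matrix.vecHead, Matrix.vecTail] <;> (try field_simp) <;>
      (try ring) <;> (try tauto)
  rw [hdetC, hprod, Matrix.det_fin_three]
  push_cast
  field_simp
  simp only [Matrix.of_apply, Matrix.cons_val, Matrix.cons_val_zero, Matrix.cons_val_one]
  linear_combination (x ^ 4 + c + 3 * c * x ^ 2 + 3 * c * x ^ 4 - c ^ 2 + c ^ 2 * x ^ 2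
    + 3 * c ^ 2 * x ^ 4 - 2 * c ^ 3 * x ^ 2 + c ^ 3 * x ^ 4) * hs2
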